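/- arXiv:1010.5807 — 3 statements merged into one kernel-verified Lean document; each statement's English description precedes it below -/
import Mathlib

section
/- For every measurable function g : (0,1) → ℝ with ∫₀¹ g(x)² x (log x)² dx < ∞, there exists a constant C > 0 (independent of g) such that ∫₀¹ (∫₀ˣ g(t) dt)² (1/x) dx ≤ C ∫₀¹ g(x)² x (log x)² dx. -/
open MeasureTheory Set Filter Topology

lemma ftc_Ioo_left {f f' : ℝ → ℝ} {x : ℝ} (hx : 0 < x) (hx1 : x < 1)
    (hderiv : ∀ t ∈ Ioo (0:ℝ) 1, HasDerivAt f (f' t) t)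
    (hpos : ∀ t ∈ Ioo (0:ℝ) 1, 0 ≤ f' t)
    (htend : Tendsto f (nhdsWithin 0 (Ioi 0)) (nhds 0)) :
    IntegrableOn f' (Ioo 0 x) ∧ ∫ t in Ioo 0 x, f' t = f x := by
  set a : ℕ → ℝ := fun n => x / (n + 2) with ha
  have hapos : ∀ n, 0 < a n := fun n => by positivity
  have haltx : ∀ n, a n < x := by
    intro n
    rw [ha, div_lt_iff₀ (by positivity)]
    nlinarith [hapos n]
  have hatend : Tendsto a atTop (𝓝 0) := by
    exact Tendsto.div_atTop tendsto_const_nhds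
      (tendsto_atTop_add_const_right atTop 2 tendsto_natCast_atTop_atTop)
  have hcont : ContinuousOn f (Ioo 0 1) := fun t ht =>
    (hderiv t ht).continuousAt.continuousWithinAt
  have hsub : ∀ n, Icc (a n) x ⊆ Ioo (0:ℝ) 1 := fun n =>
    (Icc_subset_Ioo (hapos n) hx1)
  have hcover : AECover (volume.restrict (Ioo 0 x)) atTop (fun n => Ioi (a n)) := by
    constructor
    · filter_upwards [ae_restrict_mem measurableSet_Ioo] with t ht
      exact (hatend.eventually_lt_const ht.1)
    · exact fun n => measurableSet_Ioi
  have hinter : ∀ n, Ioi (a n) ∩ Ioo 0 x = Ioo (a n) x := by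
    intro n
    ext t
    simp only [mem_inter_iff, mem_Ioi, mem_Ioo]
    constructor
    · rintro ⟨h1, _, h3⟩; exact ⟨h1, h3⟩
    · rintro ⟨h1, h2⟩; exact ⟨h1, (hapos n).trans h1, h2⟩
  have hfi : ∀ n, IntegrableOn f' (Ioi (a n)) (volume.restrict (Ioo 0 x)) := by
    intro n
    rw [IntegrableOn, Measure.restrict_restrict measurableSet_Ioi, hinter n]
    have := intervalIntegral.integrableOn_deriv_of_nonneg
      (hcont.mono (hsub n)) (fun t ht => hderiv t (hsub n (Ioo_subset_Icc_self ht)))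
      (fun t ht => hpos t (hsub n (Ioo_subset_Icc_self ht)))
    exact this.mono_set Ioo_subset_Ioc_self
  have hint : ∀ n, ∫ t in Ioi (a n), f' t ∂(volume.restrict (Ioo 0 x)) = f x - f (a n) := by
    intro n
    rw [Measure.restrict_restrict measurableSet_Ioi, hinter n,
      ← integral_Ioc_eq_integral_Ioo, ← intervalIntegral.integral_of_le (haltx n).le]
    apply intervalIntegral.integral_eq_sub_of_hasDerivAt_of_le (haltx n).le
      (hcont.mono (hsub n))
      (fun t ht => hderiv t (hsub n (Ioo_subset_Icc_self ht)))
    rw [intervalIntegrable_iff_integrableOn_Ioc_of_le (haltx n).le]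
    exact intervalIntegral.integrableOn_deriv_of_nonneg
      (hcont.mono (hsub n)) (fun t ht => hderiv t (hsub n (Ioo_subset_Icc_self ht)))
      (fun t ht => hpos t (hsub n (Ioo_subset_Icc_self ht)))
  have hlim : Tendsto (fun n => ∫ t in Ioi (a n), f' t ∂(volume.restrict (Ioo 0 x)))
      atTop (𝓝 (f x)) := by
    simp_rw [hint]
    have : Tendsto (fun n => f (a n)) atTop (𝓝 0) := by
      apply htend.comp
      apply tendsto_nhdsWithin_of_tendsto_nhds_of_eventually_within _ hatend
      exact Eventually.of_forall fun n => hapos n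
    simpa using (tendsto_const_nhds (x := f x)).sub this
  have hnng : 0 ≤ᵐ[volume.restrict (Ioo 0 x)] f' := by
    filter_upwards [ae_restrict_mem measurableSet_Ioo] with t ht
    exact hpos t ⟨ht.1, ht.2.trans hx1⟩
  have hi : Integrable f' (volume.restrict (Ioo 0 x)) :=
    hcover.integrable_of_integral_tendsto_of_nonneg_ae (f x) hfi hnng hlim
  exact ⟨hi, hcover.integral_eq_of_tendsto (f x) hi hlim⟩
open MeasureTheory Set Filter Topology

lemma ftc_Ioo_right {f f' : ℝ → ℝ} {t : ℝ} (ht : 0 < t) (ht1 : t < 1)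
    (hderiv : ∀ u ∈ Ioo (0:ℝ) 1, HasDerivAt f (f' u) u)
    (hpos : ∀ u ∈ Ioo (0:ℝ) 1, 0 ≤ f' u)
    (htend : Tendsto f (nhdsWithin 1 (Iio 1)) (nhds 0)) :
    IntegrableOn f' (Ioo t 1) ∧ ∫ u in Ioo t 1, f' u = -f t := by
  set b : ℕ → ℝ := fun n => 1 - (1 - t) / (n + 2) with hb
  have h1t : 0 < 1 - t := by linarith
  have hblt : ∀ n, b n < 1 := by
    intro n
    have : 0 < (1 - t) / (n + 2) := by positivity
    simp only [hb]; linarith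
  have hbgt : ∀ n, t < b n := by
    intro n
    have h2 : (1 - t) / ((n:ℝ) + 2) < 1 - t := by
      rw [div_lt_iff₀ (by positivity)]
      nlinarith
    simp only [hb]; linarith
  have hbtend : Tendsto b atTop (𝓝 1) := by
    have : Tendsto (fun n : ℕ => (1 - t) / ((n:ℝ) + 2)) atTop (𝓝 0) :=
      Tendsto.div_atTop tendsto_const_nhds
        (tendsto_atTop_add_const_right atTop 2 tendsto_natCast_atTop_atTop)
    simpa using (tendsto_const_nhds (x := (1:ℝ))).sub this
  have hcont : ContinuousOn f (Ioo 0 1) := fun u hu =>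
    (hderiv u hu).continuousAt.continuousWithinAt
  have hsub : ∀ n, Icc t (b n) ⊆ Ioo (0:ℝ) 1 := fun n => Icc_subset_Ioo ht (hblt n)
  have hcover : AECover (volume.restrict (Ioo t 1)) atTop (fun n => Iio (b n)) := by
    constructor
    · filter_upwards [ae_restrict_mem measurableSet_Ioo] with u hu
      exact (hbtend.eventually_const_lt hu.2)
    · exact fun n => measurableSet_Iio
  have hinter : ∀ n, Iio (b n) ∩ Ioo t 1 = Ioo t (b n) := by
    intro n
    ext u
    simp only [mem_inter_iff, mem_Iio, mem_Ioo]
    constructor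
    · rintro ⟨h1, h2, _⟩; exact ⟨h2, h1⟩
    · rintro ⟨h1, h2⟩; exact ⟨h2, h1, h2.trans (hblt n)⟩
  have hfi : ∀ n, IntegrableOn f' (Iio (b n)) (volume.restrict (Ioo t 1)) := by
    intro n
    rw [IntegrableOn, Measure.restrict_restrict measurableSet_Iio, hinter n]
    have := intervalIntegral.integrableOn_deriv_of_nonneg
      (hcont.mono (hsub n)) (fun u hu => hderiv u (hsub n (Ioo_subset_Icc_self hu)))
      (fun u hu => hpos u (hsub n (Ioo_subset_Icc_self hu)))
    exact this.mono_set Ioo_subset_Ioc_self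
  have hint : ∀ n, ∫ u in Iio (b n), f' u ∂(volume.restrict (Ioo t 1)) = f (b n) - f t := by
    intro n
    rw [Measure.restrict_restrict measurableSet_Iio, hinter n,
      ← integral_Ioc_eq_integral_Ioo, ← intervalIntegral.integral_of_le (hbgt n).le]
    apply intervalIntegral.integral_eq_sub_of_hasDerivAt_of_le (hbgt n).le
      (hcont.mono (hsub n))
      (fun u hu => hderiv u (hsub n (Ioo_subset_Icc_self hu)))
    rw [intervalIntegrable_iff_integrableOn_Ioc_of_le (hbgt n).le]
    exact intervalIntegral.integrableOn_deriv_of_nonneg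
      (hcont.mono (hsub n)) (fun u hu => hderiv u (hsub n (Ioo_subset_Icc_self hu)))
      (fun u hu => hpos u (hsub n (Ioo_subset_Icc_self hu)))
  have hlim : Tendsto (fun n => ∫ u in Iio (b n), f' u ∂(volume.restrict (Ioo t 1)))
      atTop (𝓝 (-f t)) := by
    simp_rw [hint]
    have : Tendsto (fun n => f (b n)) atTop (𝓝 0) := by
      apply htend.comp
      apply tendsto_nhdsWithin_of_tendsto_nhds_of_eventually_within _ hbtend
      exact Eventually.of_forall fun n => hblt n
    simpa using this.sub (tendsto_const_nhds (x := f t))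
  have hi : Integrable f' (volume.restrict (Ioo t 1)) :=
    hcover.integrable_of_integral_tendsto_of_nonneg_ae (-f t) hfi
      (by filter_upwards [ae_restrict_mem measurableSet_Ioo] with u hu
          exact hpos u ⟨ht.trans hu.1, hu.2⟩) hlim
  exact ⟨hi, hcover.integral_eq_of_tendsto (-f t) hi hlim⟩
open MeasureTheory Set Filter Topology

lemma neglog_pos {t : ℝ} (ht : t ∈ Ioo (0:ℝ) 1) : 0 < -Real.log t := by
  simpa using Real.log_neg ht.1 ht.2

lemma deriv_neglog_rpow {c : ℝ} {t : ℝ} (ht : t ∈ Ioo (0:ℝ) 1) :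
    HasDerivAt (fun s => (-Real.log s) ^ c) (c * (-Real.log t) ^ (c - 1) * (-t⁻¹)) t := by
  have h1 : HasDerivAt (fun s => -Real.log s) (-t⁻¹) t :=
    (Real.hasDerivAt_log ht.1.ne').neg
  have h2 : HasDerivAt (fun y : ℝ => y ^ c) (c * (-Real.log t) ^ (c - 1)) (-Real.log t) :=
    Real.hasDerivAt_rpow_const (Or.inl (neglog_pos ht).ne')
  exact h2.comp t h1

lemma L1 {x : ℝ} (hx : x ∈ Ioo (0:ℝ) 1) :
    IntegrableOn (fun t => t⁻¹ * (-Real.log t) ^ (-(3:ℝ)/2)) (Ioo 0 x) ∧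
      ∫ t in Ioo 0 x, t⁻¹ * (-Real.log t) ^ (-(3:ℝ)/2) = 2 * (-Real.log x) ^ (-(1:ℝ)/2) := by
  have := ftc_Ioo_left (f := fun s => 2 * (-Real.log s) ^ (-(1:ℝ)/2))
    (f' := fun t => t⁻¹ * (-Real.log t) ^ (-(3:ℝ)/2)) hx.1 hx.2
    (fun t ht => by
      have h := (deriv_neglog_rpow (c := -(1:ℝ)/2) ht).const_mul 2
      refine h.congr_deriv ?_
      have he : (-(1:ℝ)/2 - 1) = -(3:ℝ)/2 := by norm_num
      rw [he]; ring)
    (fun t ht => mul_nonneg (inv_nonneg.2 ht.1.le) (Real.rpow_nonneg (neglog_pos ht).le _))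
    (by
      have h1 : Tendsto (fun s : ℝ => -Real.log s) (𝓝[>] 0) atTop :=
        tendsto_neg_atBot_atTop.comp Real.tendsto_log_nhdsGT_zero
      have h2 : Tendsto (fun y : ℝ => y ^ (-(1:ℝ)/2)) atTop (𝓝 0) := by
        have := tendsto_rpow_neg_atTop (by norm_num : (0:ℝ) < 1/2)
        convert this using 2 with y
        norm_num
      have h3 := h2.comp h1
      simp only [Function.comp_def] at h3
      simpa using h3.const_mul (2:ℝ))
  exact this

lemma L2 {t : ℝ} (ht : t ∈ Ioo (0:ℝ) 1) :
    IntegrableOn (fun x => x⁻¹ * (-Real.log x) ^ (-(1:ℝ)/2)) (Ioo t 1) ∧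
      ∫ x in Ioo t 1, x⁻¹ * (-Real.log x) ^ (-(1:ℝ)/2) = 2 * (-Real.log t) ^ ((1:ℝ)/2) := by
  have := ftc_Ioo_right (f := fun s => -2 * (-Real.log s) ^ ((1:ℝ)/2))
    (f' := fun x => x⁻¹ * (-Real.log x) ^ (-(1:ℝ)/2)) ht.1 ht.2
    (fun u hu => by
      have h := (deriv_neglog_rpow (c := (1:ℝ)/2) hu).const_mul (-2)
      refine h.congr_deriv ?_
      have he : ((1:ℝ)/2 - 1) = -(1:ℝ)/2 := by norm_num
      rw [he]; ring)
    (fun u hu => mul_nonneg (inv_nonneg.2 hu.1.le) (Real.rpow_nonneg (neglog_pos hu).le _))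
    (by
      have h1 : Tendsto (fun s : ℝ => -Real.log s) (𝓝[<] 1) (𝓝 0) := by
        have := (Real.continuousAt_log (by norm_num : (1:ℝ) ≠ 0)).neg.tendsto
        simp only [Pi.neg_apply, Real.log_one, neg_zero] at this
        exact this.mono_left nhdsWithin_le_nhds
      have h2 : ContinuousAt (fun y : ℝ => y ^ ((1:ℝ)/2)) 0 :=
        Real.continuousAt_rpow_const 0 _ (Or.inr (by norm_num))
      have h3 := (h2.tendsto.comp h1)
      simp only [Function.comp_def] at h3
      rw [Real.zero_rpow (by norm_num : (1:ℝ)/2 ≠ 0)] at h3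
      simpa using h3.const_mul (-2:ℝ))
  rcases this with ⟨hi, he⟩
  refine ⟨hi, ?_⟩
  rw [he]; ring
open MeasureTheory Set Filter Topology

lemma swap_lemma {ψ c : ℝ → ENNReal} (hψ : Measurable ψ) (hc : Measurable c) :
    ∫⁻ x in Ioo (0:ℝ) 1, (∫⁻ t in Ioo 0 x, ψ t) * c x
      = ∫⁻ t in Ioo (0:ℝ) 1, ψ t * ∫⁻ x in Ioo t 1, c x := by
  set μ := volume.restrict (Ioo (0:ℝ) 1) with hμ
  set F : ℝ → ℝ → ENNReal := fun x t => if t < x then ψ t * c x else 0 with hF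
  have hFm : Measurable (Function.uncurry F) := by
    apply Measurable.ite
    · exact measurableSet_lt measurable_snd measurable_fst
    · exact (hψ.comp measurable_snd).mul (hc.comp measurable_fst)
    · exact measurable_const
  have step1 : ∀ x ∈ Ioo (0:ℝ) 1, (∫⁻ t in Ioo 0 x, ψ t) * c x = ∫⁻ t, F x t ∂μ := by
    intro x hx
    have : ∀ t, F x t = (Iio x).indicator (fun t => ψ t * c x) t := by
      intro t
      simp only [hF, indicator, mem_Iio]
    simp_rw [this]
    rw [lintegral_indicator measurableSet_Iio, hμ, Measure.restrict_restrict measurableSet_Iio]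
    have hset : Iio x ∩ Ioo 0 1 = Ioo 0 x := by
      ext t
      simp only [mem_inter_iff, mem_Iio, mem_Ioo]
      exact ⟨fun ⟨h1, h2, _⟩ => ⟨h2, h1⟩, fun ⟨h1, h2⟩ => ⟨h2, h1, h2.trans hx.2⟩⟩
    rw [hset, lintegral_mul_const _ hψ]
  have step3 : ∀ t ∈ Ioo (0:ℝ) 1, (∫⁻ x, F x t ∂μ) = ψ t * ∫⁻ x in Ioo t 1, c x := by
    intro t ht
    have : ∀ x, F x t = (Ioi t).indicator (fun x => ψ t * c x) x := by
      intro x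
      simp only [hF, indicator, mem_Ioi]
    simp_rw [this]
    rw [lintegral_indicator measurableSet_Ioi, hμ, Measure.restrict_restrict measurableSet_Ioi]
    have hset : Ioi t ∩ Ioo 0 1 = Ioo t 1 := by
      ext x
      simp only [mem_inter_iff, mem_Ioi, mem_Ioo]
      exact ⟨fun ⟨h1, _, h3⟩ => ⟨h1, h3⟩, fun ⟨h1, h2⟩ => ⟨h1, ht.1.trans h1, h2⟩⟩
    rw [hset, lintegral_const_mul _ hc]
  calc ∫⁻ x in Ioo (0:ℝ) 1, (∫⁻ t in Ioo 0 x, ψ t) * c x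
      = ∫⁻ x, ∫⁻ t, F x t ∂μ ∂μ := by
        apply setLIntegral_congr_fun measurableSet_Ioo
        exact step1
    _ = ∫⁻ t, ∫⁻ x, F x t ∂μ ∂μ := lintegral_lintegral_swap hFm.aemeasurable
    _ = ∫⁻ t in Ioo (0:ℝ) 1, ψ t * ∫⁻ x in Ioo t 1, c x := by
        apply setLIntegral_congr_fun measurableSet_Ioo
        exact step3
open MeasureTheory Set Filter Topology

lemma rpow_sq_helper {a : ℝ} (ha : 0 ≤ a) (c : ℝ) : (a ^ c) ^ 2 = a ^ (2 * c) := by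
  rw [← Real.rpow_natCast (a ^ c) 2, ← Real.rpow_mul ha]
  ring_nf

lemma meas_primitive (g : ℝ → ℝ) (hg : Measurable g) :
    StronglyMeasurable (fun x : ℝ => ∫ t in Ioo 0 x, g t) := by
  have h : StronglyMeasurable (Function.uncurry (fun x t : ℝ => (Ioo 0 x).indicator g t)) := by
    apply Measurable.stronglyMeasurable
    have : Function.uncurry (fun x t : ℝ => (Ioo 0 x).indicator g t)
        = fun p : ℝ × ℝ => ({q : ℝ × ℝ | 0 < q.2 ∧ q.2 < q.1}).indicator (fun q => g q.2) p := by
      ext p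
      simp [Function.uncurry, indicator, mem_Ioo, Set.mem_setOf_eq]
    rw [this]
    apply Measurable.indicator (hg.comp measurable_snd)
    exact (measurableSet_lt measurable_const measurable_snd).inter
      (measurableSet_lt measurable_snd measurable_fst)
  have := h.integral_prod_right' (ν := volume)
  convert this using 2 with x
  rw [← integral_indicator measurableSet_Ioo]
  rfl

/-- Hardy-type inequality with logarithmic weight: there is a constant `C > 0` such that
for every measurable `g : (0,1) → ℝ` with `∫₀¹ g² x (log x)² dx < ∞`,
`∫₀¹ (∫₀ˣ g)² (1/x) dx ≤ C ∫₀¹ g² x (log x)² dx`. -/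
theorem hardy_log_weight :
    ∃ C > (0 : ℝ), ∀ g : ℝ → ℝ, Measurable g →
      IntegrableOn (fun x => (g x) ^ 2 * x * (Real.log x) ^ 2) (Ioo 0 1) →
      ∫ x in Ioo (0:ℝ) 1, (∫ t in Ioo 0 x, g t) ^ 2 * (1 / x)
        ≤ C * ∫ x in Ioo (0:ℝ) 1, (g x) ^ 2 * x * (Real.log x) ^ 2 := by
  refine ⟨4, by norm_num, ?_⟩
  intro g hg hint
  have hFm : StronglyMeasurable (fun x : ℝ => ∫ t in Ioo 0 x, g t) := meas_primitive g hg
  set ψ : ℝ → ENNReal := fun t =>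
    ENNReal.ofReal ((g t) ^ 2 * t * (Real.log t) ^ 2 * (-Real.log t) ^ (-(1:ℝ)/2)) with hψdef
  set c : ℝ → ENNReal := fun x =>
    ENNReal.ofReal (2 * (x⁻¹ * (-Real.log x) ^ (-(1:ℝ)/2))) with hcdef
  have hψm : Measurable ψ :=
    ENNReal.measurable_ofReal.comp <|
      ((((hg.pow_const 2).mul measurable_id).mul (Real.measurable_log.pow_const 2)).mul
        ((Real.measurable_log.neg).pow measurable_const))
  have hcm : Measurable c :=
    ENNReal.measurable_ofReal.comp <|
      (measurable_const.mul (measurable_inv.mul ((Real.measurable_log.neg).pow measurable_const)))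
  -- Step A : express LHS as toReal of a lintegral
  have hLHS : (∫ x in Ioo (0:ℝ) 1, (∫ t in Ioo 0 x, g t) ^ 2 * (1 / x))
      = (∫⁻ x in Ioo (0:ℝ) 1,
          ENNReal.ofReal ((∫ t in Ioo 0 x, g t) ^ 2 * (1 / x))).toReal := by
    rw [integral_eq_lintegral_of_nonneg_ae]
    · filter_upwards [ae_restrict_mem measurableSet_Ioo] with x hx
      exact mul_nonneg (sq_nonneg _) (one_div_nonneg.2 hx.1.le)
    · exact ((hFm.measurable.pow_const 2).mul
        (measurable_const.div measurable_id)).aestronglyMeasurable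
  -- Step B : pointwise Cauchy-Schwarz bound
  have key : ∀ x ∈ Ioo (0:ℝ) 1,
      ENNReal.ofReal ((∫ t in Ioo 0 x, g t) ^ 2 * (1 / x))
        ≤ (∫⁻ t in Ioo 0 x, ψ t) * c x := by
    intro x hx
    have hsub : Ioo 0 x ⊆ Ioo (0:ℝ) 1 := Ioo_subset_Ioo le_rfl hx.2.le
    set p1 : ℝ → ENNReal := fun t =>
      ENNReal.ofReal (|g t| * (t ^ ((1:ℝ)/2) * (-Real.log t) ^ ((3:ℝ)/4))) with hp1def
    set p2 : ℝ → ENNReal := fun t =>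
      ENNReal.ofReal (t ^ (-(1:ℝ)/2) * (-Real.log t) ^ (-(3:ℝ)/4)) with hp2def
    have hp1m : Measurable p1 :=
      ENNReal.measurable_ofReal.comp <| hg.abs.mul
        ((measurable_id.pow measurable_const).mul ((Real.measurable_log.neg).pow measurable_const))
    have hp2m : Measurable p2 :=
      ENNReal.measurable_ofReal.comp <|
        (measurable_id.pow measurable_const).mul ((Real.measurable_log.neg).pow measurable_const)
    set N : ENNReal := ∫⁻ t in Ioo 0 x, ENNReal.ofReal |g t| with hNdef
    set A : ENNReal := ∫⁻ t in Ioo 0 x, ψ t with hAdef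
    set B : ENNReal := ∫⁻ t in Ioo 0 x,
      ENNReal.ofReal (t⁻¹ * (-Real.log t) ^ (-(3:ℝ)/2)) with hBdef
    -- (a)
    have ha : ENNReal.ofReal ((∫ t in Ioo 0 x, g t) ^ 2) ≤ N * N := by
      have h1 : |∫ t in Ioo 0 x, g t| ≤ ∫ t in Ioo 0 x, |g t| := by
        simpa [Real.norm_eq_abs] using
          norm_integral_le_integral_norm (μ := volume.restrict (Ioo 0 x)) g
      have h2 : (∫ t in Ioo 0 x, |g t|) = N.toReal := by
        rw [hNdef, integral_eq_lintegral_of_nonneg_ae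
          (Eventually.of_forall fun t => abs_nonneg _) hg.abs.aestronglyMeasurable]
      calc ENNReal.ofReal ((∫ t in Ioo 0 x, g t) ^ 2)
          = ENNReal.ofReal (|∫ t in Ioo 0 x, g t| * |∫ t in Ioo 0 x, g t|) := by
            rw [abs_mul_abs_self, sq]
        _ = ENNReal.ofReal |∫ t in Ioo 0 x, g t| * ENNReal.ofReal |∫ t in Ioo 0 x, g t| :=
            ENNReal.ofReal_mul (abs_nonneg _)
        _ ≤ ENNReal.ofReal N.toReal * ENNReal.ofReal N.toReal := by
            have := ENNReal.ofReal_le_ofReal (h2 ▸ h1)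
            exact mul_le_mul' this this
        _ ≤ N * N := mul_le_mul' ENNReal.ofReal_toReal_le ENNReal.ofReal_toReal_le
    -- Hölder
    have hNle : N ≤ (∫⁻ t in Ioo 0 x, p1 t ^ (2:ℝ)) ^ (1/(2:ℝ))
        * (∫⁻ t in Ioo 0 x, p2 t ^ (2:ℝ)) ^ (1/(2:ℝ)) := by
      have hsplit : ∀ t ∈ Ioo (0:ℝ) x, ENNReal.ofReal |g t| = p1 t * p2 t := by
        intro t ht
        have ht0 : (0:ℝ) < t := ht.1
        have hl : (0:ℝ) < -Real.log t := by
          simpa using Real.log_neg ht0 ((hsub ht).2)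
        have h1 : t ^ ((1:ℝ)/2) * t ^ (-(1:ℝ)/2) = 1 := by
          rw [← Real.rpow_add ht0]; norm_num
        have h2 : (-Real.log t) ^ ((3:ℝ)/4) * (-Real.log t) ^ (-(3:ℝ)/4) = 1 := by
          rw [← Real.rpow_add hl]; norm_num
        rw [hp1def, hp2def]
        rw [← ENNReal.ofReal_mul
          (mul_nonneg (abs_nonneg _)
            (mul_nonneg (Real.rpow_nonneg ht0.le _) (Real.rpow_nonneg hl.le _)))]
        congr 1
        symm
        calc |g t| * (t ^ ((1:ℝ)/2) * (-Real.log t) ^ ((3:ℝ)/4))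
              * (t ^ (-(1:ℝ)/2) * (-Real.log t) ^ (-(3:ℝ)/4))
            = |g t| * ((t ^ ((1:ℝ)/2) * t ^ (-(1:ℝ)/2))
              * ((-Real.log t) ^ ((3:ℝ)/4) * (-Real.log t) ^ (-(3:ℝ)/4))) := by ring
          _ = |g t| := by rw [h1, h2]; ring
      have hN' : N = ∫⁻ t in Ioo 0 x, (p1 * p2) t := by
        rw [hNdef]
        exact setLIntegral_congr_fun measurableSet_Ioo hsplit
      rw [hN']
      exact ENNReal.lintegral_mul_le_Lp_mul_Lq _ ⟨by norm_num, by norm_num, by norm_num⟩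
        hp1m.aemeasurable hp2m.aemeasurable
    have hA' : (∫⁻ t in Ioo 0 x, p1 t ^ (2:ℝ)) = A := by
      rw [hAdef]
      apply setLIntegral_congr_fun measurableSet_Ioo
      intro t ht
      have ht0 : (0:ℝ) < t := ht.1
      have hl : (0:ℝ) < -Real.log t := by
        simpa using Real.log_neg ht0 ((hsub ht).2)
      rw [hp1def]
      beta_reduce
      rw [ENNReal.ofReal_rpow_of_nonneg
        (mul_nonneg (abs_nonneg _)
          (mul_nonneg (Real.rpow_nonneg ht0.le _) (Real.rpow_nonneg hl.le _))) (by norm_num)]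
      congr 1
      have hcast : ∀ a : ℝ, a ^ (2:ℝ) = a ^ 2 := fun a => by
        rw [show (2:ℝ) = ((2:ℕ):ℝ) by norm_num, Real.rpow_natCast]
      rw [hcast]
      rw [mul_pow, mul_pow, sq_abs, rpow_sq_helper ht0.le, rpow_sq_helper hl.le]
      have e1 : t ^ (2 * ((1:ℝ)/2)) = t := by norm_num
      have e2 : (-Real.log t) ^ (2 * ((3:ℝ)/4))
          = (Real.log t) ^ 2 * (-Real.log t) ^ (-(1:ℝ)/2) := by
        have : (-Real.log t) ^ (2 * ((3:ℝ)/4))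
            = (-Real.log t) ^ (2:ℝ) * (-Real.log t) ^ (-(1:ℝ)/2) := by
          rw [← Real.rpow_add hl]; norm_num
        rw [this, show ((2:ℝ) = ((2:ℕ):ℝ)) by norm_num, Real.rpow_natCast, neg_sq]
      rw [e1, e2]
      ring
    have hB' : (∫⁻ t in Ioo 0 x, p2 t ^ (2:ℝ)) = B := by
      rw [hBdef]
      apply setLIntegral_congr_fun measurableSet_Ioo
      intro t ht
      have ht0 : (0:ℝ) < t := ht.1
      have hl : (0:ℝ) < -Real.log t := by
        simpa using Real.log_neg ht0 ((hsub ht).2)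
      rw [hp2def]
      beta_reduce
      rw [ENNReal.ofReal_rpow_of_nonneg
        (mul_nonneg (Real.rpow_nonneg ht0.le _) (Real.rpow_nonneg hl.le _)) (by norm_num)]
      congr 1
      have hcast : ∀ a : ℝ, a ^ (2:ℝ) = a ^ 2 := fun a => by
        rw [show (2:ℝ) = ((2:ℕ):ℝ) by norm_num, Real.rpow_natCast]
      rw [hcast, mul_pow, rpow_sq_helper ht0.le, rpow_sq_helper hl.le]
      congr 1
      · rw [show (2 * (-(1:ℝ)/2)) = (-1:ℝ) by norm_num, Real.rpow_neg_one]
      · norm_num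
    have hab : N * N ≤ A * B := by
      have hrw : ∀ X : ENNReal, X ^ (1/(2:ℝ)) * X ^ (1/(2:ℝ)) = X := by
        intro X
        rw [← ENNReal.rpow_add_of_nonneg _ _ (by norm_num) (by norm_num)]
        norm_num
      calc N * N ≤ ((∫⁻ t in Ioo 0 x, p1 t ^ (2:ℝ)) ^ (1/(2:ℝ))
            * (∫⁻ t in Ioo 0 x, p2 t ^ (2:ℝ)) ^ (1/(2:ℝ)))
          * ((∫⁻ t in Ioo 0 x, p1 t ^ (2:ℝ)) ^ (1/(2:ℝ))
            * (∫⁻ t in Ioo 0 x, p2 t ^ (2:ℝ)) ^ (1/(2:ℝ))) := mul_le_mul' hNle hNle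
        _ = A * B := by
            rw [mul_mul_mul_comm, hrw, hrw, hA', hB']
    -- value of B
    have hBval : B = ENNReal.ofReal (2 * (-Real.log x) ^ (-(1:ℝ)/2)) := by
      obtain ⟨hi1, he1⟩ := L1 hx
      rw [hBdef, ← ofReal_integral_eq_lintegral_ofReal hi1 ?_, he1]
      filter_upwards [ae_restrict_mem measurableSet_Ioo] with t ht
      have hl : (0:ℝ) < -Real.log t := by
        simpa using Real.log_neg ht.1 ((hsub ht).2)
      exact mul_nonneg (inv_nonneg.2 ht.1.le) (Real.rpow_nonneg hl.le _)
    -- combine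
    calc ENNReal.ofReal ((∫ t in Ioo 0 x, g t) ^ 2 * (1 / x))
        = ENNReal.ofReal ((∫ t in Ioo 0 x, g t) ^ 2) * ENNReal.ofReal (1 / x) :=
          ENNReal.ofReal_mul (sq_nonneg _)
      _ ≤ (A * B) * ENNReal.ofReal (1 / x) := mul_le_mul_left (ha.trans hab) _
      _ = A * (B * ENNReal.ofReal (1 / x)) := mul_assoc _ _ _
      _ = (∫⁻ t in Ioo 0 x, ψ t) * c x := by
          rw [hBval, hcdef, ← ENNReal.ofReal_mul
            (mul_nonneg (by norm_num)
              (Real.rpow_nonneg (by simpa using (Real.log_neg hx.1 hx.2).le) _))]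
          rw [hAdef]
          congr 2
          rw [one_div]
          ring
  -- Step C : global chain
  have main : (∫⁻ x in Ioo (0:ℝ) 1,
      ENNReal.ofReal ((∫ t in Ioo 0 x, g t) ^ 2 * (1 / x)))
      ≤ ENNReal.ofReal (4 * ∫ t in Ioo (0:ℝ) 1, (g t) ^ 2 * t * (Real.log t) ^ 2) := by
    calc (∫⁻ x in Ioo (0:ℝ) 1, ENNReal.ofReal ((∫ t in Ioo 0 x, g t) ^ 2 * (1 / x)))
        ≤ ∫⁻ x in Ioo (0:ℝ) 1, (∫⁻ t in Ioo 0 x, ψ t) * c x := by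
          apply lintegral_mono_ae
          filter_upwards [ae_restrict_mem measurableSet_Ioo] with x hx
          exact key x hx
      _ = ∫⁻ t in Ioo (0:ℝ) 1, ψ t * ∫⁻ x in Ioo t 1, c x := swap_lemma hψm hcm
      _ = ∫⁻ t in Ioo (0:ℝ) 1, ENNReal.ofReal (4 * ((g t) ^ 2 * t * (Real.log t) ^ 2)) := by
          apply setLIntegral_congr_fun measurableSet_Ioo
          intro t ht
          beta_reduce
          have hl : (0:ℝ) < -Real.log t := by
            simpa using Real.log_neg ht.1 ht.2
          obtain ⟨hi2, he2⟩ := L2 ht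
          have hInt : (∫⁻ x in Ioo t 1, c x)
              = ENNReal.ofReal (4 * (-Real.log t) ^ ((1:ℝ)/2)) := by
            rw [hcdef, ← ofReal_integral_eq_lintegral_ofReal (hi2.const_mul 2) ?_]
            · rw [integral_const_mul, he2]
              congr 1
              ring
            · filter_upwards [ae_restrict_mem measurableSet_Ioo] with u hu
              have hlu : (0:ℝ) < -Real.log u := by
                simpa using Real.log_neg (ht.1.trans hu.1) hu.2
              have hu0 : (0:ℝ) < u := ht.1.trans hu.1
              exact mul_nonneg (by norm_num)
                (mul_nonneg (inv_nonneg.2 hu0.le) (Real.rpow_nonneg hlu.le _))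
          rw [hInt, hψdef, ← ENNReal.ofReal_mul ?_]
          · congr 1
            have hone : (-Real.log t) ^ (-(1:ℝ)/2) * (-Real.log t) ^ ((1:ℝ)/2) = 1 := by
              rw [← Real.rpow_add hl]; norm_num
            calc (g t) ^ 2 * t * (Real.log t) ^ 2 * (-Real.log t) ^ (-(1:ℝ)/2)
                  * (4 * (-Real.log t) ^ ((1:ℝ)/2))
                = 4 * ((g t) ^ 2 * t * (Real.log t) ^ 2)
                  * ((-Real.log t) ^ (-(1:ℝ)/2) * (-Real.log t) ^ ((1:ℝ)/2)) := by ring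
              _ = 4 * ((g t) ^ 2 * t * (Real.log t) ^ 2) := by rw [hone]; ring
          · exact mul_nonneg
              (mul_nonneg (mul_nonneg (sq_nonneg _) ht.1.le) (sq_nonneg _))
              (Real.rpow_nonneg hl.le _)
      _ = ENNReal.ofReal (∫ t in Ioo (0:ℝ) 1,
            4 * ((g t) ^ 2 * t * (Real.log t) ^ 2)) := by
          rw [← ofReal_integral_eq_lintegral_ofReal (hint.const_mul 4)]
          filter_upwards [ae_restrict_mem measurableSet_Ioo] with t ht
          have : (0:ℝ) ≤ (g t) ^ 2 * t * (Real.log t) ^ 2 :=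
            mul_nonneg (mul_nonneg (sq_nonneg _) ht.1.le) (sq_nonneg _)
          simp only [Pi.zero_apply]
          linarith
      _ = ENNReal.ofReal (4 * ∫ t in Ioo (0:ℝ) 1, (g t) ^ 2 * t * (Real.log t) ^ 2) := by
          rw [integral_const_mul]
  -- Step D : conclude
  have hvpos : (0:ℝ) ≤ ∫ t in Ioo (0:ℝ) 1, (g t) ^ 2 * t * (Real.log t) ^ 2 := by
    apply setIntegral_nonneg measurableSet_Ioo
    intro t ht
    exact mul_nonneg (mul_nonneg (sq_nonneg _) ht.1.le) (sq_nonneg _)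
  rw [hLHS]
  calc (∫⁻ x in Ioo (0:ℝ) 1,
        ENNReal.ofReal ((∫ t in Ioo 0 x, g t) ^ 2 * (1 / x))).toReal
      ≤ (ENNReal.ofReal
          (4 * ∫ t in Ioo (0:ℝ) 1, (g t) ^ 2 * t * (Real.log t) ^ 2)).toReal :=
        ENNReal.toReal_mono ENNReal.ofReal_ne_top main
    _ = 4 * ∫ t in Ioo (0:ℝ) 1, (g t) ^ 2 * t * (Real.log t) ^ 2 :=
        ENNReal.toReal_ofReal (by linarith)
end

section
/- Let N ≥ 2, b > 2, B = B(0,√b), ρ(m) = b − |m|², and μ(m) = ρ(m)^{2−b/2}. There exists C > 0 such that for every C¹ function φ : B → ℝ with ∫_B (φ² + |∇φ|²) μ dm < ∞, one has ∫_B (|φ(m)| + |∇φ(m)|) dm ≤ C (∫_B (φ(m)² + |∇φ(m)|²) μ(m) dm)^{1/2}. -/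
open MeasureTheory Measure Set Metric Module

lemma lintegral_fun_norm_addHaar_ennreal
    {E : Type*} [NormedAddCommGroup E] [NormedSpace ℝ E] [MeasurableSpace E] [BorelSpace E]
    [FiniteDimensional ℝ E] [Nontrivial E]
    (μ : Measure E) [μ.IsAddHaarMeasure] {f : ℝ → ENNReal} (hf : Measurable f) :
    ∫⁻ x, f ‖x‖ ∂μ =
      μ.toSphere univ * ∫⁻ y in Ioi (0:ℝ),
        ENNReal.ofReal (y ^ (finrank ℝ E - 1)) * f y := by
  have h1 : ∫⁻ x, f ‖x‖ ∂μ = ∫⁻ x : ({(0:E)}ᶜ : Set E), f ‖(x:E)‖ ∂(μ.comap (↑)) := by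
    rw [lintegral_subtype_comap (measurableSet_singleton (0:E)).compl (fun x => f ‖x‖),
      MeasureTheory.restrict_compl_singleton]
  have h2 := μ.measurePreserving_homeomorphUnitSphereProd.lintegral_comp
    (f := fun z : sphere (0:E) 1 × Ioi (0:ℝ) => f z.2) (hf.comp (measurable_subtype_coe.comp measurable_snd))
  simp only [homeomorphUnitSphereProd_apply_snd_coe] at h2
  rw [h1, h2]
  have h4 : ∫⁻ z : sphere (0:E) 1 × Ioi (0:ℝ), f z.2
        ∂(μ.toSphere.prod (Measure.volumeIoiPow (finrank ℝ E - 1)))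
      = μ.toSphere univ * ∫⁻ y : Ioi (0:ℝ), f y ∂(Measure.volumeIoiPow (finrank ℝ E - 1)) := by
    rw [lintegral_prod (f := fun z : sphere (0:E) 1 × Ioi (0:ℝ) => f z.2)
      (Measurable.aemeasurable (by exact hf.comp (measurable_subtype_coe.comp measurable_snd)))]
    simp [lintegral_const, mul_comm]
  have h5 : ∫⁻ y : Ioi (0:ℝ), f y ∂(Measure.volumeIoiPow (finrank ℝ E - 1))
      = ∫⁻ y in Ioi (0:ℝ), ENNReal.ofReal (y ^ (finrank ℝ E - 1)) * f y := by
    rw [Measure.volumeIoiPow, lintegral_withDensity_eq_lintegral_mul _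
      ((measurable_subtype_coe.pow_const _).ennreal_ofReal)
      (g := fun y : Ioi (0:ℝ) => f y) (by exact hf.comp measurable_subtype_coe)]
    rw [← lintegral_subtype_comap measurableSet_Ioi
      (fun y => ENNReal.ofReal (y ^ (finrank ℝ E - 1)) * f y)]
    rfl
  rw [h4, h5]


lemma measurable_rpow_const' (β : ℝ) : Measurable fun x : ℝ => x ^ β := by
  have h : (fun x : ℝ => x ^ β) = fun x =>
      if x < 0 then Real.exp (Real.log x * β) * Real.cos (β * Real.pi) else
      if x = 0 then (if β = 0 then (1:ℝ) else 0) else Real.exp (Real.log x * β) := by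
    funext x
    rcases lt_trichotomy x 0 with hx | hx | hx
    · rw [if_pos hx, Real.rpow_def_of_neg hx]
    · subst hx
      rw [if_neg (lt_irrefl _), if_pos rfl]
      by_cases hβ : β = 0
      · rw [if_pos hβ, hβ, Real.rpow_zero]
      · rw [if_neg hβ, Real.zero_rpow hβ]
    · rw [if_neg (not_lt.mpr hx.le), if_neg hx.ne', Real.rpow_def_of_pos hx]
  rw [h]
  refine Measurable.ite ?_ ?_ ?_
  · exact measurableSet_Iio
  · exact ((Real.measurable_log.mul measurable_const).exp).mul measurable_const
  · refine Measurable.ite ?_ measurable_const ?_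
    · exact MeasurableSet.singleton 0
    · exact (Real.measurable_log.mul measurable_const).exp

lemma measurable_rpow_base (β : ℝ) {α : Type*} [MeasurableSpace α] {f : α → ℝ}
    (hf : Measurable f) : Measurable fun x => f x ^ β :=
  (measurable_rpow_const' β).comp hf

lemma integrableOn_rpow_sub_sq (N : ℕ) (hN : 1 ≤ N) {b β : ℝ} (hb : 0 < b) (hβ : -1 < β) :
    IntegrableOn (fun m : EuclideanSpace ℝ (Fin N) => (b - ‖m‖ ^ 2) ^ β)
      (Metric.ball 0 (Real.sqrt b)) volume := by
  haveI : Nontrivial (EuclideanSpace ℝ (Fin N)) :=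
    nontrivial_of_finrank_pos (R := ℝ) (by rw [finrank_euclideanSpace_fin]; omega)
  set E := EuclideanSpace ℝ (Fin N)
  set R := Real.sqrt b with hRdef
  have hR0 : 0 < R := Real.sqrt_pos.mpr hb
  have hRsq : R ^ 2 = b := Real.sq_sqrt hb.le
  have meas : Measurable (fun m : E => (b - ‖m‖ ^ 2) ^ β) :=
    measurable_rpow_base β (measurable_const.sub (measurable_norm.pow_const 2))
  set F : E → ℝ := fun m => (b - ‖m‖ ^ 2) ^ β with hFdef
  refine ⟨meas.aestronglyMeasurable, ?_⟩
  rw [hasFiniteIntegral_iff_norm]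
  set d := finrank ℝ E - 1 with hd
  set f₀ : ℝ → ENNReal :=
    fun r => (Set.Iio R).indicator (fun r => ENNReal.ofReal ((b - r ^ 2) ^ β)) r with hf₀def
  have hf₀ : Measurable f₀ :=
    ((measurable_rpow_base β (measurable_const.sub (measurable_id.pow_const 2))).ennreal_ofReal).indicator
      measurableSet_Iio
  have hball : ∀ m : E, m ∈ Metric.ball (0 : E) R → ‖m‖ ^ 2 < b := by
    intro m hm
    rw [mem_ball_zero_iff] at hm
    calc ‖m‖ ^ 2 ≤ ‖m‖ ^ 2 := le_refl _
      _ < R ^ 2 := by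
          apply pow_lt_pow_left₀ hm (norm_nonneg m) (by norm_num)
      _ = b := hRsq
  have step1 : ∫⁻ (m : E) in Metric.ball 0 R, ENNReal.ofReal ‖F m‖ ∂volume
      ≤ ∫⁻ (m : E), f₀ ‖m‖ ∂volume := by
    rw [← lintegral_indicator measurableSet_ball]
    refine lintegral_mono fun m => ?_
    by_cases hm : m ∈ Metric.ball (0 : E) R
    · have hmb : ‖m‖ ^ 2 < b := hball m hm
      have hmR : ‖m‖ < R := by rwa [mem_ball_zero_iff] at hm
      have hx : (0 : ℝ) ≤ (b - ‖m‖ ^ 2) ^ β := Real.rpow_nonneg (by linarith) β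
      simp only [Set.indicator_of_mem hm, hf₀def,
        Set.indicator_of_mem (Set.mem_Iio.mpr hmR), hFdef]
      rw [Real.norm_of_nonneg hx]
    · simp [Set.indicator_of_notMem hm]
  have step2 := lintegral_fun_norm_addHaar_ennreal (volume : Measure E) hf₀
  have hG : IntegrableOn (fun y => y ^ d * (b - y ^ 2) ^ β) (Set.Ioo 0 R) volume := by
    have h1 : IntegrableOn (fun y => (R - y) ^ β) (Set.Ioo 0 R) volume := by
      have h := (intervalIntegral.intervalIntegrable_rpow' (r := β) hβ (a := 0) (b := R)).comp_sub_left R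
      simp only [_root_.sub_self, sub_zero] at h
      exact (intervalIntegrable_iff_integrableOn_Ioo_of_le hR0.le).mp h.symm
    set K : ℝ := R ^ d * max (R ^ β) ((2 * R) ^ β) with hK
    have hbound : ∀ y ∈ Set.Ioo (0:ℝ) R, ‖y ^ d * (b - y ^ 2) ^ β‖ ≤ K * (R - y) ^ β := by
      intro y hy
      obtain ⟨hy0, hyR⟩ := hy
      have hfac : b - y ^ 2 = (R - y) * (R + y) := by rw [← hRsq]; ring
      have hbpos : 0 < b - y ^ 2 := by
        rw [hfac]; exact mul_pos (by linarith) (by linarith)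
      have h2 : (b - y ^ 2) ^ β = (R - y) ^ β * (R + y) ^ β := by
        rw [hfac, Real.mul_rpow (by linarith) (by linarith)]
      have h3 : (R + y) ^ β ≤ max (R ^ β) ((2 * R) ^ β) := by
        rcases le_or_gt 0 β with hβ0 | hβ0
        · exact le_trans (Real.rpow_le_rpow (by linarith) (by linarith) hβ0) (le_max_right _ _)
        · exact le_trans (Real.rpow_le_rpow_of_nonpos hR0 (by linarith) hβ0.le) (le_max_left _ _)
      have h4 : y ^ d ≤ R ^ d := pow_le_pow_left₀ hy0.le hyR.le d
      rw [Real.norm_of_nonneg (mul_nonneg (pow_nonneg hy0.le _) (Real.rpow_nonneg hbpos.le _))]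
      rw [h2]
      have h5 : y ^ d * ((R - y) ^ β * (R + y) ^ β)
          ≤ R ^ d * ((R - y) ^ β * max (R ^ β) ((2 * R) ^ β)) := by
        refine mul_le_mul h4 ?_ ?_ (pow_nonneg hR0.le d)
        · exact mul_le_mul_of_nonneg_left h3 (Real.rpow_nonneg (by linarith) β)
        · exact mul_nonneg (Real.rpow_nonneg (by linarith) β) (Real.rpow_nonneg (by linarith) β)
      refine le_trans h5 (le_of_eq ?_)
      rw [hK]; ring
    refine Integrable.mono' (h1.const_mul K) ?_ ?_
    · exact ((measurable_id.pow_const d).mul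
        (measurable_rpow_base β (measurable_const.sub (measurable_id.pow_const 2)))).aestronglyMeasurable
    · exact (ae_restrict_mem measurableSet_Ioo).mono hbound
  have hJ : ∫⁻ y in Set.Ioi (0:ℝ), ENNReal.ofReal (y ^ d) * f₀ y < ⊤ := by
    have e1 : ∫⁻ y in Set.Ioi (0:ℝ), ENNReal.ofReal (y ^ d) * f₀ y
        = ∫⁻ y in Set.Ioo (0:ℝ) R,
            ENNReal.ofReal (y ^ d) * ENNReal.ofReal ((b - y ^ 2) ^ β) := by
      have hpt : ∀ y : ℝ, ENNReal.ofReal (y ^ d) * f₀ y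
          = (Set.Iio R).indicator
              (fun y => ENNReal.ofReal (y ^ d) * ENNReal.ofReal ((b - y ^ 2) ^ β)) y := by
        intro y
        by_cases hy : y ∈ Set.Iio R
        · simp only [hf₀def, Set.indicator_of_mem hy]
        · simp only [hf₀def, Set.indicator_of_notMem hy, mul_zero]
      rw [lintegral_congr hpt, lintegral_indicator measurableSet_Iio,
        Measure.restrict_restrict measurableSet_Iio, Set.Iio_inter_Ioi]
    have e2 : ∫⁻ y in Set.Ioo (0:ℝ) R,
        ENNReal.ofReal (y ^ d) * ENNReal.ofReal ((b - y ^ 2) ^ β)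
        = ∫⁻ y in Set.Ioo (0:ℝ) R, ENNReal.ofReal (y ^ d * (b - y ^ 2) ^ β) := by
      refine setLIntegral_congr_fun measurableSet_Ioo (fun y hy => ?_)
      rw [← ENNReal.ofReal_mul (pow_nonneg hy.1.le d)]
    rw [e1, e2]
    calc ∫⁻ y in Set.Ioo (0:ℝ) R, ENNReal.ofReal (y ^ d * (b - y ^ 2) ^ β)
        ≤ ∫⁻ y in Set.Ioo (0:ℝ) R, ENNReal.ofReal ‖y ^ d * (b - y ^ 2) ^ β‖ := by
          refine lintegral_mono fun y => ENNReal.ofReal_le_ofReal (le_abs_self _)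
      _ < ⊤ := by
          have := hG.2
          rwa [hasFiniteIntegral_iff_norm] at this
  calc ∫⁻ (m : E) in Metric.ball 0 R, ENNReal.ofReal ‖F m‖ ∂volume
      ≤ ∫⁻ (m : E), f₀ ‖m‖ ∂volume := step1
    _ = (volume : Measure E).toSphere Set.univ
          * ∫⁻ y in Set.Ioi (0:ℝ), ENNReal.ofReal (y ^ d) * f₀ y := step2
    _ < ⊤ := ENNReal.mul_lt_top (measure_lt_top _ _) hJ

/-- For `b > 2` the weighted Sobolev space `H¹_μ(B)` with `μ = ρ^{2-b/2}` embeds into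
`W^{1,1}(B)`: there is `C > 0` such that for every `C¹` function `φ` on `B` with finite
weighted norm, `∫_B (|φ| + |∇φ|) ≤ C (∫_B (φ² + |∇φ|²) μ)^{1/2}`. -/
theorem H1mu_embeds_W11 (N : ℕ) (hN : 2 ≤ N) (b : ℝ) (hb : 2 < b)
    (B : Set (EuclideanSpace ℝ (Fin N)))
    (hB : B = Metric.ball (0 : EuclideanSpace ℝ (Fin N)) (Real.sqrt b))
    (μ : EuclideanSpace ℝ (Fin N) → ℝ)
    (hμ : ∀ m, μ m = (b - ‖m‖ ^ 2) ^ (2 - b / 2 : ℝ)) :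
    ∃ C > (0 : ℝ), ∀ φ : EuclideanSpace ℝ (Fin N) → ℝ,
      ContDiffOn ℝ 1 φ B →
      IntegrableOn (fun m => ((φ m) ^ 2 + ‖fderiv ℝ φ m‖ ^ 2) * μ m) B volume →
      ∫ m in B, (|φ m| + ‖fderiv ℝ φ m‖)
        ≤ C * (∫ m in B, ((φ m) ^ 2 + ‖fderiv ℝ φ m‖ ^ 2) * μ m) ^ ((1:ℝ)/2) := by
  have hμ' : μ = fun m => (b - ‖m‖ ^ 2) ^ (2 - b / 2 : ℝ) := funext hμ
  subst hμ'
  subst hB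
  have hb0 : (0:ℝ) < b := by linarith
  have hβ : (-1:ℝ) < b / 2 - 2 := by linarith
  set R := Real.sqrt b with hRdef
  set w : EuclideanSpace ℝ (Fin N) → ℝ := fun m => (b - ‖m‖ ^ 2) ^ (b / 2 - 2 : ℝ) with hwdef
  have hw_int : IntegrableOn w (Metric.ball 0 R) volume :=
    integrableOn_rpow_sub_sq N (by omega) hb0 hβ
  have hball_pos : ∀ m ∈ Metric.ball (0 : EuclideanSpace ℝ (Fin N)) R, 0 < b - ‖m‖ ^ 2 := by
    intro m hm
    rw [mem_ball_zero_iff] at hm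
    have h1 : ‖m‖ ^ 2 < R ^ 2 := pow_lt_pow_left₀ hm (norm_nonneg m) (by norm_num)
    have h2 : R ^ 2 = b := Real.sq_sqrt hb0.le
    linarith
  have hw_nonneg : ∀ m ∈ Metric.ball (0 : EuclideanSpace ℝ (Fin N)) R, 0 ≤ w m :=
    fun m hm => Real.rpow_nonneg (hball_pos m hm).le _
  set I := ∫ m in Metric.ball (0 : EuclideanSpace ℝ (Fin N)) R, w m with hIdef
  have hI0 : 0 ≤ I := setIntegral_nonneg measurableSet_ball hw_nonneg
  refine ⟨Real.sqrt 2 * (I + 1) ^ ((1:ℝ)/2),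
    mul_pos (Real.sqrt_pos.mpr two_pos) (Real.rpow_pos_of_pos (by linarith) _), ?_⟩
  intro φ hφ hint
  set g : EuclideanSpace ℝ (Fin N) → ℝ := fun m => (φ m) ^ 2 + ‖fderiv ℝ φ m‖ ^ 2 with hgdef
  have hg0 : ∀ m, 0 ≤ g m := fun m => by positivity
  set μf : EuclideanSpace ℝ (Fin N) → ℝ := fun m => (b - ‖m‖ ^ 2) ^ (2 - b / 2 : ℝ) with hμfdef
  have hμfm : Measurable μf :=
    measurable_rpow_base _ (measurable_const.sub (measurable_norm.pow_const 2))
  have hwm : Measurable w :=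
    measurable_rpow_base _ (measurable_const.sub (measurable_norm.pow_const 2))
  have hμf0 : ∀ m ∈ Metric.ball (0 : EuclideanSpace ℝ (Fin N)) R, 0 ≤ μf m :=
    fun m hm => Real.rpow_nonneg (hball_pos m hm).le _
  set ν := volume.restrict (Metric.ball (0 : EuclideanSpace ℝ (Fin N)) R) with hνdef
  have hφae : AEMeasurable φ ν := (hφ.continuousOn).aemeasurable measurableSet_ball
  have hDm : Measurable (fun m => ‖fderiv ℝ φ m‖) := (measurable_fderiv ℝ φ).norm
  have hgae : AEMeasurable g ν := (hφae.pow_const 2).add ((hDm.aemeasurable).pow_const 2)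
  set F1 : EuclideanSpace ℝ (Fin N) → ℝ := fun m => Real.sqrt (g m * μf m) with hF1def
  set F2 : EuclideanSpace ℝ (Fin N) → ℝ := fun m => Real.sqrt (w m) with hF2def
  have hF1ae : AEMeasurable F1 ν :=
    Real.continuous_sqrt.measurable.comp_aemeasurable (hgae.mul hμfm.aemeasurable)
  have hF2ae : AEMeasurable F2 ν :=
    Real.continuous_sqrt.measurable.comp_aemeasurable hwm.aemeasurable
  have hF1mem : MemLp F1 2 ν := by
    refine (memLp_two_iff_integrable_sq hF1ae.aestronglyMeasurable).mpr ?_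
    refine Integrable.congr hint ?_
    filter_upwards [ae_restrict_mem measurableSet_ball] with m hm
    rw [hF1def]
    rw [Real.sq_sqrt (mul_nonneg (hg0 m) (hμf0 m hm))]
  have hF2mem : MemLp F2 2 ν := by
    refine (memLp_two_iff_integrable_sq hF2ae.aestronglyMeasurable).mpr ?_
    refine Integrable.congr hw_int ?_
    filter_upwards [ae_restrict_mem measurableSet_ball] with m hm
    rw [hF2def, Real.sq_sqrt (hw_nonneg m hm)]
  have hpqr : (1 : ENNReal) / 1 = 1 / 2 + 1 / 2 := by
    rw [ENNReal.div_add_div_same, one_add_one_eq_two,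
      ENNReal.div_self two_ne_zero ENNReal.ofNat_ne_top, one_div_one]
  have hF12 : Integrable (fun m => F1 m * F2 m) ν := by
    have h := memLp_one_iff_integrable.mp (hF1mem.smul (r := 1) hF2mem)
    exact h.congr (Filter.Eventually.of_forall fun m => by
      simp [Pi.smul_apply, smul_eq_mul, mul_comm])
  have hpq : Real.HolderConjugate 2 2 := Real.HolderConjugate.two_two
  have hof2 : ENNReal.ofReal (2:ℝ) = 2 := by norm_num
  have hF1mem' : MemLp F1 (ENNReal.ofReal 2) ν := by rw [hof2]; exact hF1mem
  have hF2mem' : MemLp F2 (ENNReal.ofReal 2) ν := by rw [hof2]; exact hF2mem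
  have holder := integral_mul_le_Lp_mul_Lq_of_nonneg (μ := ν) hpq
    (Filter.Eventually.of_forall fun m => Real.sqrt_nonneg _)
    (Filter.Eventually.of_forall fun m => Real.sqrt_nonneg _)
    hF1mem' hF2mem'
  have h_ae : ∀ᵐ m ∂ν, |φ m| + ‖fderiv ℝ φ m‖ ≤ Real.sqrt 2 * (F1 m * F2 m) := by
    filter_upwards [ae_restrict_mem measurableSet_ball] with m hm
    have hx : 0 < b - ‖m‖ ^ 2 := hball_pos m hm
    have huw : μf m * w m = 1 := by
      rw [hμfdef, hwdef]
      simp only []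
      rw [← Real.rpow_add hx]
      norm_num
    have e1 : F1 m * F2 m = Real.sqrt (g m) := by
      rw [hF1def, hF2def]
      simp only []
      rw [← Real.sqrt_mul (mul_nonneg (hg0 m) (hμf0 m hm)), mul_assoc, huw, mul_one]
    have habs : (|φ m| + ‖fderiv ℝ φ m‖) ^ 2 ≤ 2 * g m := by
      rw [hgdef]
      simp only []
      nlinarith [sq_abs (φ m), abs_nonneg (φ m), norm_nonneg (fderiv ℝ φ m),
        sq_nonneg (|φ m| - ‖fderiv ℝ φ m‖)]
    calc |φ m| + ‖fderiv ℝ φ m‖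
        = Real.sqrt ((|φ m| + ‖fderiv ℝ φ m‖) ^ 2) := (Real.sqrt_sq (by positivity)).symm
      _ ≤ Real.sqrt (2 * g m) := Real.sqrt_le_sqrt habs
      _ = Real.sqrt 2 * Real.sqrt (g m) := Real.sqrt_mul (by norm_num) _
      _ = Real.sqrt 2 * (F1 m * F2 m) := by rw [e1]
  have hXeq : ∫ m, F1 m ^ (2:ℝ) ∂ν = ∫ m, g m * μf m ∂ν := by
    refine integral_congr_ae ?_
    filter_upwards [ae_restrict_mem measurableSet_ball] with m hm
    rw [show (2:ℝ) = ((2:ℕ):ℝ) by norm_num, Real.rpow_natCast, hF1def]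
    rw [Real.sq_sqrt (mul_nonneg (hg0 m) (hμf0 m hm))]
  have hIeq : ∫ m, F2 m ^ (2:ℝ) ∂ν = I := by
    refine integral_congr_ae ?_
    filter_upwards [ae_restrict_mem measurableSet_ball] with m hm
    rw [show (2:ℝ) = ((2:ℕ):ℝ) by norm_num, Real.rpow_natCast, hF2def]
    rw [Real.sq_sqrt (hw_nonneg m hm)]
  have hX0 : 0 ≤ ∫ m, g m * μf m ∂ν :=
    setIntegral_nonneg measurableSet_ball fun m hm => mul_nonneg (hg0 m) (hμf0 m hm)
  have hXh0 : 0 ≤ (∫ m, g m * μf m ∂ν) ^ ((1:ℝ)/2) := Real.rpow_nonneg hX0 _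
  have hIle : I ^ ((1:ℝ)/2) ≤ (I + 1) ^ ((1:ℝ)/2) :=
    Real.rpow_le_rpow hI0 (by linarith) (by norm_num)
  calc ∫ m, (|φ m| + ‖fderiv ℝ φ m‖) ∂ν
      ≤ ∫ m, Real.sqrt 2 * (F1 m * F2 m) ∂ν :=
        integral_mono_of_nonneg (Filter.Eventually.of_forall fun m => by positivity)
          (hF12.const_mul _) h_ae
    _ = Real.sqrt 2 * ∫ m, F1 m * F2 m ∂ν := integral_const_mul _ _
    _ ≤ Real.sqrt 2 * ((∫ m, F1 m ^ (2:ℝ) ∂ν) ^ ((1:ℝ)/2)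
          * (∫ m, F2 m ^ (2:ℝ) ∂ν) ^ ((1:ℝ)/2)) :=
        mul_le_mul_of_nonneg_left holder (Real.sqrt_nonneg 2)
    _ = Real.sqrt 2 * ((∫ m, g m * μf m ∂ν) ^ ((1:ℝ)/2) * I ^ ((1:ℝ)/2)) := by
        rw [hXeq, hIeq]
    _ ≤ Real.sqrt 2 * ((∫ m, g m * μf m ∂ν) ^ ((1:ℝ)/2) * (I + 1) ^ ((1:ℝ)/2)) := by
        refine mul_le_mul_of_nonneg_left ?_ (Real.sqrt_nonneg 2)
        exact mul_le_mul_of_nonneg_left hIle hXh0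
    _ = Real.sqrt 2 * (I + 1) ^ ((1:ℝ)/2) * (∫ m, g m * μf m ∂ν) ^ ((1:ℝ)/2) := by ring
end

section
/- Let N ≥ 2 and let G : [0, r₀] → ℝ be defined by G(r)² = (1/2) ∫_{S^{N-1}} φ(rξ)² r^{N−2} dS_ξ for a C¹ function φ, where 1 ≤ r ≤ r₀. Suppose G is differentiable at r with G(r) > 0. Then G'(r)² ≤ ∫_{S^{N-1}} |∇φ(rξ)|² r^{N−2} dS_ξ + ((N−2)²/2) G(r)². -/
open MeasureTheory

variable {α : Type*} [MeasurableSpace α] {μ : Measure α}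

/-- Cauchy–Schwarz inequality for real integrals. -/
lemma sq_integral_mul_le {f g : α → ℝ}
    (hf : Integrable (fun a => f a ^ 2) μ) (hg : Integrable (fun a => g a ^ 2) μ)
    (hfg : Integrable (fun a => f a * g a) μ) :
    (∫ a, f a * g a ∂μ) ^ 2 ≤ (∫ a, f a ^ 2 ∂μ) * ∫ a, g a ^ 2 ∂μ := by
  set A := ∫ a, f a ^ 2 ∂μ with hA
  set B := ∫ a, g a ^ 2 ∂μ with hB
  set C := ∫ a, f a * g a ∂μ with hC
  have h : ∀ t : ℝ, 0 ≤ B * (t * t) + (-2 * C) * t + A := by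
    intro t
    have hpt : ∀ a, (t * g a - f a) ^ 2
        = (t ^ 2 * g a ^ 2 + (-2 * t) * (f a * g a)) + f a ^ 2 := by
      intro a; ring
    have hint : ∫ a, (t * g a - f a) ^ 2 ∂μ
        = (t ^ 2 * B + (-2 * t) * C) + A := by
      simp_rw [hpt]
      have i1 : Integrable (fun a => t ^ 2 * g a ^ 2) μ := hg.const_mul _
      have i2 : Integrable (fun a => (-2 * t) * (f a * g a)) μ := hfg.const_mul _
      rw [integral_add (f := fun a => t ^ 2 * g a ^ 2 + (-2 * t) * (f a * g a)) (i1.add i2) hf,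
        integral_add i1 i2,
        integral_const_mul, integral_const_mul]
    have hnn : 0 ≤ ∫ a, (t * g a - f a) ^ 2 ∂μ :=
      integral_nonneg fun a => sq_nonneg _
    rw [hint] at hnn
    nlinarith [hnn]
  have hd := discrim_le_zero h
  rw [discrim] at hd
  nlinarith [hd]

/-- A continuous real function on a compact space is integrable w.r.t. a finite measure. -/
lemma Continuous.integrable_of_compactSpace {X : Type*} [MeasurableSpace X]
    [TopologicalSpace X] [OpensMeasurableSpace X] [T2Space X] [CompactSpace X]
    (μ : Measure X) [IsFiniteMeasure μ] {f : X → ℝ} (hf : Continuous f) :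
    Integrable f μ := by
  have h := hf.continuousOn.integrableOn_compact (μ := μ) isCompact_univ
  rwa [integrableOn_univ] at h

/-- Pure algebra for the final estimate. -/
lemma final_algebra {P Q J c X Y Gr g : ℝ} (hPnn : 0 ≤ P) (hJnn : 0 ≤ J)
    (hQJ : Q ^ 2 ≤ P * J) (hXY : Y ≤ X) (hY : 0 ≤ Y)
    (hGr2 : Gr ^ 2 = 1 / 2 * (P * X))
    (heq : 2 * Gr * g = 1 / 2 * (2 * Q * X + P * (c * Y))) (hGr : 0 < Gr) :
    g ^ 2 ≤ J * X + c ^ 2 / 2 * Gr ^ 2 := by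
  have key2 : (2 * Gr * g) ^ 2 ≤ 4 * Gr ^ 2 * (J * X + c ^ 2 / 2 * Gr ^ 2) := by
    rw [heq, hGr2]
    have h1 : Q ^ 2 * X ^ 2 ≤ P * J * X ^ 2 := mul_le_mul_of_nonneg_right hQJ (sq_nonneg X)
    have h2 : Y ^ 2 ≤ X ^ 2 := by nlinarith
    have h3 : c ^ 2 * (P ^ 2 * Y ^ 2) ≤ c ^ 2 * (P ^ 2 * X ^ 2) := by
      have := mul_le_mul_of_nonneg_left h2 (sq_nonneg P)
      exact mul_le_mul_of_nonneg_left this (sq_nonneg c)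
    nlinarith [sq_nonneg (Q * X - c / 2 * P * Y), h1, h3]
  have hden : (0 : ℝ) < 4 * Gr ^ 2 := by positivity
  have key3 : 4 * Gr ^ 2 * g ^ 2 ≤ 4 * Gr ^ 2 * (J * X + c ^ 2 / 2 * Gr ^ 2) := by
    have hring : (2 * Gr * g) ^ 2 = 4 * Gr ^ 2 * g ^ 2 := by ring
    linarith [key2]
  exact le_of_mul_le_mul_left key3 hden

/-- Spherical-average estimate used in the critical case `b = 2`: if
`G(r)² = (1/2) ∫_{S^{N-1}} φ(rξ)² r^{N-2} dS_ξ` for `1 ≤ r ≤ r₀`, `φ` is `C¹`, and `G` is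
differentiable at `r` with `G(r) > 0`, then
`G'(r)² ≤ ∫_{S^{N-1}} |∇φ(rξ)|² r^{N-2} dS_ξ + ((N-2)²/2) G(r)²`. -/
theorem spherical_average_estimate (N : ℕ) (hN : 2 ≤ N) (r₀ : ℝ) (hr₀ : 1 ≤ r₀)
    (φ : EuclideanSpace ℝ (Fin N) → ℝ) (hφ : ContDiff ℝ 1 φ)
    (G : ℝ → ℝ)
    (hG : ∀ r ∈ Set.Icc (1 : ℝ) r₀, (G r) ^ 2 =
      (1 / 2) * ∫ ξ : Metric.sphere (0 : EuclideanSpace ℝ (Fin N)) 1,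
        (φ (r • (ξ : EuclideanSpace ℝ (Fin N)))) ^ 2 * r ^ ((N : ℝ) - 2)
          ∂((volume : Measure (EuclideanSpace ℝ (Fin N))).toSphere))
    (r : ℝ) (hr : r ∈ Set.Ioo (1 : ℝ) r₀)
    (hdiff : DifferentiableAt ℝ G r) (hpos : 0 < G r) :
    (deriv G r) ^ 2 ≤
      (∫ ξ : Metric.sphere (0 : EuclideanSpace ℝ (Fin N)) 1,
        ‖gradient φ (r • (ξ : EuclideanSpace ℝ (Fin N)))‖ ^ 2 * r ^ ((N : ℝ) - 2)
          ∂((volume : Measure (EuclideanSpace ℝ (Fin N))).toSphere))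
      + ((N : ℝ) - 2) ^ 2 / 2 * (G r) ^ 2 := by
  obtain ⟨hr1, hr2⟩ := hr
  have hrpos : (0 : ℝ) < r := lt_trans one_pos hr1
  set μ := (volume : Measure (EuclideanSpace ℝ (Fin N))).toSphere with hμ
  set c : ℝ := (N : ℝ) - 2 with hc
  -- basic continuity facts
  have hφc : Continuous φ := hφ.continuous
  have hfd : Continuous (fderiv ℝ φ) := hφ.continuous_fderiv one_ne_zero
  have hφd : Differentiable ℝ φ := hφ.differentiable one_ne_zero
  have hnormξ : ∀ ξ : Metric.sphere (0 : EuclideanSpace ℝ (Fin N)) 1,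
      ‖(ξ : EuclideanSpace ℝ (Fin N))‖ = 1 := fun ξ =>
    mem_sphere_zero_iff_norm.mp ξ.2
  have hgradnorm : ∀ x : EuclideanSpace ℝ (Fin N), ‖gradient φ x‖ = ‖fderiv ℝ φ x‖ := fun x =>
    LinearIsometryEquiv.norm_map _ _
  -- continuity of various maps on the sphere
  have hcoe : ∀ s : ℝ, Continuous (fun ξ : Metric.sphere (0 : EuclideanSpace ℝ (Fin N)) 1 =>
      s • (ξ : EuclideanSpace ℝ (Fin N))) := fun s =>
    continuous_subtype_val.const_smul s
  have hu_cont : ∀ s : ℝ, Continuous (fun ξ : Metric.sphere (0 : EuclideanSpace ℝ (Fin N)) 1 =>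
      φ (s • (ξ : EuclideanSpace ℝ (Fin N))) ^ 2) := fun s =>
    (hφc.comp (hcoe s)).pow 2
  have hv_cont : ∀ s : ℝ, Continuous (fun ξ : Metric.sphere (0 : EuclideanSpace ℝ (Fin N)) 1 =>
      fderiv ℝ φ (s • (ξ : EuclideanSpace ℝ (Fin N))) (ξ : EuclideanSpace ℝ (Fin N))) :=
    fun s => ((hfd.comp (hcoe s)).clm_apply continuous_subtype_val)
  -- bounds on a compact set
  obtain ⟨C₁, hC₁⟩ := (isCompact_closedBall (0 : EuclideanSpace ℝ (Fin N)) (r + 1)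
    ).exists_bound_of_continuousOn hφc.continuousOn
  obtain ⟨C₂, hC₂⟩ := (isCompact_closedBall (0 : EuclideanSpace ℝ (Fin N)) (r + 1)
    ).exists_bound_of_continuousOn hfd.continuousOn
  have hmem : ∀ (s : ℝ), s ∈ Metric.ball r 1 →
      ∀ ξ : Metric.sphere (0 : EuclideanSpace ℝ (Fin N)) 1,
      s • (ξ : EuclideanSpace ℝ (Fin N)) ∈
        Metric.closedBall (0 : EuclideanSpace ℝ (Fin N)) (r + 1) := by
    intro s hs ξ
    rw [Metric.mem_closedBall, dist_zero_right, norm_smul, hnormξ ξ, mul_one]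
    rw [Metric.mem_ball, Real.dist_eq] at hs
    obtain ⟨h1, h2⟩ := abs_lt.mp hs
    rw [Real.norm_eq_abs, abs_le]
    constructor <;> linarith
  -- differentiation under the integral sign
  have key := hasDerivAt_integral_of_dominated_loc_of_deriv_le (μ := μ)
      (F := fun (s : ℝ) ξ => φ (s • (ξ : EuclideanSpace ℝ (Fin N))) ^ 2)
      (F' := fun (s : ℝ) ξ => 2 * φ (s • (ξ : EuclideanSpace ℝ (Fin N))) *
        fderiv ℝ φ (s • (ξ : EuclideanSpace ℝ (Fin N))) (ξ : EuclideanSpace ℝ (Fin N)))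
      (bound := fun _ => 2 * |C₁| * |C₂|) (Metric.ball_mem_nhds r one_pos)
      (Filter.Eventually.of_forall fun s => ((hu_cont s)).aestronglyMeasurable)
      ((hu_cont r).integrable_of_compactSpace μ)
      ((continuous_const.mul (hφc.comp (hcoe r))).mul (hv_cont r)).aestronglyMeasurable
      ?_ (integrable_const _) ?_
  rotate_left
  · -- the bound
    refine Filter.Eventually.of_forall fun ξ s hs => ?_
    have hx := hmem s hs ξ
    have h1 : |φ (s • (ξ : EuclideanSpace ℝ (Fin N)))| ≤ |C₁| :=
      le_trans (hC₁ _ hx) (le_abs_self C₁)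
    have h2 : |fderiv ℝ φ (s • (ξ : EuclideanSpace ℝ (Fin N)))
        (ξ : EuclideanSpace ℝ (Fin N))| ≤ |C₂| := by
      calc |fderiv ℝ φ (s • (ξ : EuclideanSpace ℝ (Fin N))) (ξ : EuclideanSpace ℝ (Fin N))|
          ≤ ‖fderiv ℝ φ (s • (ξ : EuclideanSpace ℝ (Fin N)))‖ *
            ‖(ξ : EuclideanSpace ℝ (Fin N))‖ := (fderiv ℝ φ _).le_opNorm _
        _ = ‖fderiv ℝ φ (s • (ξ : EuclideanSpace ℝ (Fin N)))‖ := by rw [hnormξ ξ, mul_one]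
        _ ≤ |C₂| := le_trans (hC₂ _ hx) (le_abs_self C₂)
    beta_reduce
    rw [Real.norm_eq_abs, abs_mul, abs_mul, abs_two]
    have := mul_le_mul h1 h2 (abs_nonneg _) (abs_nonneg _)
    nlinarith [abs_nonneg (φ (s • (ξ : EuclideanSpace ℝ (Fin N)))), abs_nonneg C₁]
  · -- differentiability in s
    refine Filter.Eventually.of_forall fun ξ s hs => ?_
    have h1 : HasDerivAt (fun y : ℝ => y • (ξ : EuclideanSpace ℝ (Fin N)))
        ((ξ : EuclideanSpace ℝ (Fin N))) s := by
      simpa using (hasDerivAt_id s).smul_const (ξ : EuclideanSpace ℝ (Fin N))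
    have h2 : HasDerivAt (fun y : ℝ => φ (y • (ξ : EuclideanSpace ℝ (Fin N))))
        (fderiv ℝ φ (s • (ξ : EuclideanSpace ℝ (Fin N))) (ξ : EuclideanSpace ℝ (Fin N))) s :=
      (hφd _).hasFDerivAt.comp_hasDerivAt s h1
    simpa [pow_one] using h2.fun_pow 2
  obtain ⟨-, hH⟩ := key
  set P : ℝ := ∫ ξ : Metric.sphere (0 : EuclideanSpace ℝ (Fin N)) 1,
    φ (r • (ξ : EuclideanSpace ℝ (Fin N))) ^ 2 ∂μ with hPdef
  set Q : ℝ := ∫ ξ : Metric.sphere (0 : EuclideanSpace ℝ (Fin N)) 1,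
    φ (r • (ξ : EuclideanSpace ℝ (Fin N))) *
      fderiv ℝ φ (r • (ξ : EuclideanSpace ℝ (Fin N))) (ξ : EuclideanSpace ℝ (Fin N)) ∂μ
    with hQdef
  set J : ℝ := ∫ ξ : Metric.sphere (0 : EuclideanSpace ℝ (Fin N)) 1,
    ‖gradient φ (r • (ξ : EuclideanSpace ℝ (Fin N)))‖ ^ 2 ∂μ with hJdef
  have hD' : (∫ ξ : Metric.sphere (0 : EuclideanSpace ℝ (Fin N)) 1,
      2 * φ (r • (ξ : EuclideanSpace ℝ (Fin N))) *
        fderiv ℝ φ (r • (ξ : EuclideanSpace ℝ (Fin N))) (ξ : EuclideanSpace ℝ (Fin N)) ∂μ)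
      = 2 * Q := by
    rw [hQdef, ← integral_const_mul]
    simp_rw [mul_assoc]
  rw [hD'] at hH
  have hrpow : HasDerivAt (fun s : ℝ => s ^ c) (c * r ^ (c - 1)) r :=
    Real.hasDerivAt_rpow_const (Or.inl hrpos.ne')
  have hF2 : HasDerivAt
      (fun s : ℝ => (1 / 2) * ((∫ ξ : Metric.sphere (0 : EuclideanSpace ℝ (Fin N)) 1,
        φ (s • (ξ : EuclideanSpace ℝ (Fin N))) ^ 2 ∂μ) * s ^ c))
      ((1 / 2) * ((2 * Q) * r ^ c + P * (c * r ^ (c - 1)))) r :=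
    (hH.mul hrpow).const_mul (1 / 2 : ℝ)
  have hev : (fun s : ℝ => G s ^ 2) =ᶠ[nhds r]
      (fun s : ℝ => (1 / 2) * ((∫ ξ : Metric.sphere (0 : EuclideanSpace ℝ (Fin N)) 1,
        φ (s • (ξ : EuclideanSpace ℝ (Fin N))) ^ 2 ∂μ) * s ^ c)) := by
    filter_upwards [Ioo_mem_nhds hr1 hr2] with s hs
    rw [hG s (Set.Ioo_subset_Icc_self hs), integral_mul_const]
  have hG2 : HasDerivAt (fun s : ℝ => G s ^ 2)
      ((1 / 2) * ((2 * Q) * r ^ c + P * (c * r ^ (c - 1)))) r :=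
    hF2.congr_of_eventuallyEq hev
  have hG2' : HasDerivAt (fun s : ℝ => G s ^ 2) (2 * G r * deriv G r) r := by
    simpa [pow_one] using hdiff.hasDerivAt.fun_pow 2
  have heq : 2 * G r * deriv G r = (1 / 2) * ((2 * Q) * r ^ c + P * (c * r ^ (c - 1))) :=
    hG2'.unique hG2
  have hGr2 : G r ^ 2 = 1 / 2 * (P * r ^ c) := by
    rw [hG r ⟨hr1.le, hr2.le⟩, integral_mul_const]
  -- integrability
  have hP_int : Integrable (fun ξ : Metric.sphere (0 : EuclideanSpace ℝ (Fin N)) 1 =>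
      φ (r • (ξ : EuclideanSpace ℝ (Fin N))) ^ 2) μ :=
    (hu_cont r).integrable_of_compactSpace μ
  have hQ_int : Integrable (fun ξ : Metric.sphere (0 : EuclideanSpace ℝ (Fin N)) 1 =>
      φ (r • (ξ : EuclideanSpace ℝ (Fin N))) *
        fderiv ℝ φ (r • (ξ : EuclideanSpace ℝ (Fin N))) (ξ : EuclideanSpace ℝ (Fin N))) μ :=
    ((hφc.comp (hcoe r)).mul (hv_cont r)).integrable_of_compactSpace μ
  have hR_int : Integrable (fun ξ : Metric.sphere (0 : EuclideanSpace ℝ (Fin N)) 1 =>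
      (fderiv ℝ φ (r • (ξ : EuclideanSpace ℝ (Fin N))) (ξ : EuclideanSpace ℝ (Fin N))) ^ 2) μ :=
    ((hv_cont r).pow 2).integrable_of_compactSpace μ
  have hJ_int : Integrable (fun ξ : Metric.sphere (0 : EuclideanSpace ℝ (Fin N)) 1 =>
      ‖gradient φ (r • (ξ : EuclideanSpace ℝ (Fin N)))‖ ^ 2) μ := by
    have hfun : (fun ξ : Metric.sphere (0 : EuclideanSpace ℝ (Fin N)) 1 =>
        ‖gradient φ (r • (ξ : EuclideanSpace ℝ (Fin N)))‖ ^ 2)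
        = fun ξ : Metric.sphere (0 : EuclideanSpace ℝ (Fin N)) 1 =>
        ‖fderiv ℝ φ (r • (ξ : EuclideanSpace ℝ (Fin N)))‖ ^ 2 :=
      funext fun ξ => by rw [hgradnorm]
    rw [hfun]
    exact (((hfd.comp (hcoe r)).norm).pow 2).integrable_of_compactSpace μ
  -- Cauchy-Schwarz and pointwise bound
  have hCS : Q ^ 2 ≤ P * ∫ ξ : Metric.sphere (0 : EuclideanSpace ℝ (Fin N)) 1,
      (fderiv ℝ φ (r • (ξ : EuclideanSpace ℝ (Fin N))) (ξ : EuclideanSpace ℝ (Fin N))) ^ 2 ∂μ :=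
    sq_integral_mul_le hP_int hR_int hQ_int
  have hRJ : (∫ ξ : Metric.sphere (0 : EuclideanSpace ℝ (Fin N)) 1,
      (fderiv ℝ φ (r • (ξ : EuclideanSpace ℝ (Fin N))) (ξ : EuclideanSpace ℝ (Fin N))) ^ 2 ∂μ)
      ≤ J := by
    refine integral_mono hR_int hJ_int fun ξ => ?_
    have h2 : |fderiv ℝ φ (r • (ξ : EuclideanSpace ℝ (Fin N))) (ξ : EuclideanSpace ℝ (Fin N))|
        ≤ ‖gradient φ (r • (ξ : EuclideanSpace ℝ (Fin N)))‖ := by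
      rw [hgradnorm]
      calc |fderiv ℝ φ (r • (ξ : EuclideanSpace ℝ (Fin N))) (ξ : EuclideanSpace ℝ (Fin N))|
          ≤ ‖fderiv ℝ φ (r • (ξ : EuclideanSpace ℝ (Fin N)))‖ *
            ‖(ξ : EuclideanSpace ℝ (Fin N))‖ := (fderiv ℝ φ _).le_opNorm _
        _ = ‖fderiv ℝ φ (r • (ξ : EuclideanSpace ℝ (Fin N)))‖ := by rw [hnormξ ξ, mul_one]
    calc (fderiv ℝ φ (r • (ξ : EuclideanSpace ℝ (Fin N))) (ξ : EuclideanSpace ℝ (Fin N))) ^ 2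
        = |fderiv ℝ φ (r • (ξ : EuclideanSpace ℝ (Fin N))) (ξ : EuclideanSpace ℝ (Fin N))| ^ 2 :=
          (sq_abs _).symm
      _ ≤ ‖gradient φ (r • (ξ : EuclideanSpace ℝ (Fin N)))‖ ^ 2 :=
          pow_le_pow_left₀ (abs_nonneg _) h2 2
  have hPnn : 0 ≤ P := integral_nonneg fun ξ => sq_nonneg _
  have hJnn : 0 ≤ J := integral_nonneg fun ξ => sq_nonneg _
  have hQJ : Q ^ 2 ≤ P * J := le_trans hCS (mul_le_mul_of_nonneg_left hRJ hPnn)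
  -- final algebra
  rw [integral_mul_const]
  have hX : 0 < r ^ c := Real.rpow_pos_of_pos hrpos c
  have hY : 0 < r ^ (c - 1) := Real.rpow_pos_of_pos hrpos _
  have hYX : r ^ (c - 1) ≤ r ^ c := Real.rpow_le_rpow_of_exponent_le hr1.le (by linarith)
  exact final_algebra hPnn hJnn hQJ hYX hY.le hGr2 heq hpos
end
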